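/- The expected cost C_exp has a unique global minimizer over ℝ × [0,∞): if (X₁,Y₁) and (X₂,Y₂) both minimize C_exp over ℝ × [0,∞), then X₁ = X₂ and Y₁ = Y₂. -/

import Mathlib

open Real MeasureTheory Filter


lemma aux_tri (p q r s : ℝ) :
    Real.sqrt ((p + r) ^ 2 + (q + s) ^ 2) ≤
      Real.sqrt (p ^ 2 + q ^ 2) + Real.sqrt (r ^ 2 + s ^ 2) := by
  have hA : (0:ℝ) ≤ p ^ 2 + q ^ 2 := by positivity
  have hB : (0:ℝ) ≤ r ^ 2 + s ^ 2 := by positivity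
  have e1 := Real.sq_sqrt hA
  have e2 := Real.sq_sqrt hB
  have hcs : p * r + q * s ≤ Real.sqrt (p ^ 2 + q ^ 2) * Real.sqrt (r ^ 2 + s ^ 2) := by
    rw [← Real.sqrt_mul hA]
    calc p * r + q * s ≤ |p * r + q * s| := le_abs_self _
      _ = Real.sqrt ((p * r + q * s) ^ 2) := (Real.sqrt_sq_eq_abs _).symm
      _ ≤ Real.sqrt ((p ^ 2 + q ^ 2) * (r ^ 2 + s ^ 2)) :=
          Real.sqrt_le_sqrt (by nlinarith [sq_nonneg (p * s - q * r)])
  have key : (p + r) ^ 2 + (q + s) ^ 2 ≤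
      (Real.sqrt (p ^ 2 + q ^ 2) + Real.sqrt (r ^ 2 + s ^ 2)) ^ 2 := by nlinarith
  calc Real.sqrt ((p + r) ^ 2 + (q + s) ^ 2)
      ≤ Real.sqrt ((Real.sqrt (p ^ 2 + q ^ 2) + Real.sqrt (r ^ 2 + s ^ 2)) ^ 2) :=
        Real.sqrt_le_sqrt key
    _ = _ := Real.sqrt_sq (by positivity)

lemma aux_tri_eq (p q r s : ℝ)
    (h : Real.sqrt ((p + r) ^ 2 + (q + s) ^ 2) =
      Real.sqrt (p ^ 2 + q ^ 2) + Real.sqrt (r ^ 2 + s ^ 2)) :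
    p * s = q * r := by
  have hA : (0:ℝ) ≤ p ^ 2 + q ^ 2 := by positivity
  have hB : (0:ℝ) ≤ r ^ 2 + s ^ 2 := by positivity
  have e1 := Real.sq_sqrt hA
  have e2 := Real.sq_sqrt hB
  have e0 := Real.sq_sqrt (show (0:ℝ) ≤ (p + r) ^ 2 + (q + s) ^ 2 by positivity)
  have hs : Real.sqrt (p ^ 2 + q ^ 2) * Real.sqrt (r ^ 2 + s ^ 2)
      = Real.sqrt ((p ^ 2 + q ^ 2) * (r ^ 2 + s ^ 2)) := (Real.sqrt_mul hA _).symm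
  have hsq : Real.sqrt ((p ^ 2 + q ^ 2) * (r ^ 2 + s ^ 2)) ^ 2
      = (p ^ 2 + q ^ 2) * (r ^ 2 + s ^ 2) := Real.sq_sqrt (by positivity)
  have h' : (p + r) ^ 2 + (q + s) ^ 2
      = (Real.sqrt (p ^ 2 + q ^ 2) + Real.sqrt (r ^ 2 + s ^ 2)) ^ 2 := by rw [← h, e0]
  have key : p * r + q * s = Real.sqrt ((p ^ 2 + q ^ 2) * (r ^ 2 + s ^ 2)) := by nlinarith
  have key2 : (p * r + q * s) ^ 2 = (p ^ 2 + q ^ 2) * (r ^ 2 + s ^ 2) := by rw [key, hsq]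
  have hz : (p * s - q * r) ^ 2 = 0 := by nlinarith
  have := pow_eq_zero_iff (n := 2) (by norm_num) |>.mp hz
  linarith [sub_eq_zero.mp this]

lemma aux_sqrt_add (u v : ℝ) (hu : 0 ≤ u) (hv : 0 ≤ v) :
    Real.sqrt (u + v ^ 2) ≤ Real.sqrt u + v := by
  have e1 := Real.sq_sqrt hu
  have h1 : u + v ^ 2 ≤ (Real.sqrt u + v) ^ 2 := by nlinarith [Real.sqrt_nonneg u]
  calc Real.sqrt (u + v ^ 2) ≤ Real.sqrt ((Real.sqrt u + v) ^ 2) := Real.sqrt_le_sqrt h1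
    _ = _ := Real.sqrt_sq (by positivity)

lemma aux_sqrt_add2 (u v : ℝ) (hu : 0 < u) :
    Real.sqrt (u + v ^ 2) ≤ Real.sqrt u + v ^ 2 / (2 * Real.sqrt u) := by
  have e1 := Real.sq_sqrt hu.le
  have hs : 0 < Real.sqrt u := Real.sqrt_pos.mpr hu
  have h1 : u + v ^ 2 ≤ (Real.sqrt u + v ^ 2 / (2 * Real.sqrt u)) ^ 2 := by
    have : (v ^ 2 / (2 * Real.sqrt u)) ^ 2 ≥ 0 := by positivity
    have he : Real.sqrt u * (v ^ 2 / (2 * Real.sqrt u)) = v ^ 2 / 2 := by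
      field_simp
    nlinarith
  calc Real.sqrt (u + v ^ 2) ≤ _ := Real.sqrt_le_sqrt h1
    _ = _ := Real.sqrt_sq (by positivity)


set_option maxHeartbeats 2000000 in
/-- `C_exp` has a unique global minimizer over ℝ × [0,∞). -/
theorem stmt_7
    (W M a b c : ℝ) (φ : ℝ → ℝ)
    (hW : 0 < W) (hM : 0 < M) (hφm : Measurable φ)
    (hφ0 : ∀ x, 0 ≤ φ x) (hφM : ∀ x, φ x ≤ M)
    (hφs : ∀ x, x ∉ Set.Icc (0:ℝ) W → φ x = 0)
    (hφ1 : (∫ x in (0:ℝ)..W, φ x) = 1)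
    (hb : 0 < b) (hc : 0 < c) (hca : c < a)
    (Cexp : ℝ → ℝ → ℝ)
    (hCexp : ∀ X Y : ℝ, Cexp X Y =
      ∫ x in (0:ℝ)..W, (a * Real.sqrt (b * (X - x) ^ 2 + Y ^ 2) - c * Y) * φ x) :
    ∀ X₁ Y₁ X₂ Y₂ : ℝ, 0 ≤ Y₁ → 0 ≤ Y₂ →
      (∀ X Y : ℝ, 0 ≤ Y → Cexp X₁ Y₁ ≤ Cexp X Y) →
      (∀ X Y : ℝ, 0 ≤ Y → Cexp X₂ Y₂ ≤ Cexp X Y) →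
      X₁ = X₂ ∧ Y₁ = Y₂ := by
  have ha : 0 < a := hc.trans hca
  have hμfin : volume (Set.Ioc (0:ℝ) W) ≠ ⊤ := by
    rw [Real.volume_Ioc]; exact ENNReal.ofReal_ne_top
  have hGm : ∀ X Y : ℝ, Measurable fun x => (a * Real.sqrt (b * (X - x) ^ 2 + Y ^ 2) - c * Y) * φ x := by
    intro X Y
    apply Measurable.mul _ hφm
    fun_prop
  have hsb : ∀ X Y : ℝ, ∀ x ∈ Set.Ioc (0:ℝ) W, |a * Real.sqrt (b * (X - x) ^ 2 + Y ^ 2) - c * Y|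
      ≤ a * Real.sqrt (b * (|X| + W) ^ 2 + Y ^ 2) + c * |Y| := by
    intro X Y x hx
    have h1 : (X - x) ^ 2 ≤ (|X| + W) ^ 2 := by
      nlinarith [le_abs_self X, neg_abs_le X, abs_nonneg X, hx.1, hx.2,
        mul_le_mul_of_nonneg_left hx.2 (abs_nonneg X)]
    have h2 : Real.sqrt (b * (X - x) ^ 2 + Y ^ 2) ≤ Real.sqrt (b * (|X| + W) ^ 2 + Y ^ 2) :=
      Real.sqrt_le_sqrt (by nlinarith)
    have h3 : 0 ≤ Real.sqrt (b * (X - x) ^ 2 + Y ^ 2) := Real.sqrt_nonneg _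
    rw [abs_le]
    constructor <;>
      nlinarith [le_abs_self Y, neg_abs_le Y, Real.sqrt_nonneg (b * (|X| + W) ^ 2 + Y ^ 2)]
  have hGint : ∀ X Y : ℝ, IntegrableOn
      (fun x => (a * Real.sqrt (b * (X - x) ^ 2 + Y ^ 2) - c * Y) * φ x) (Set.Ioc (0:ℝ) W) volume := by
    intro X Y
    apply Measure.integrableOn_of_bounded hμfin (hGm X Y).aestronglyMeasurable
      (M := (a * Real.sqrt (b * (|X| + W) ^ 2 + Y ^ 2) + c * |Y|) * M)
    rw [ae_restrict_iff' measurableSet_Ioc]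
    filter_upwards with x hx
    have h1 := hsb X Y x hx
    have hφb : |φ x| ≤ M := abs_le.mpr ⟨by linarith [hφ0 x], hφM x⟩
    rw [Real.norm_eq_abs, abs_mul]
    exact mul_le_mul h1 hφb (abs_nonneg _) (by positivity)
  have hφint : IntegrableOn φ (Set.Ioc (0:ℝ) W) volume := by
    apply Measure.integrableOn_of_bounded hμfin hφm.aestronglyMeasurable (M := M)
    filter_upwards with x
    rw [Real.norm_eq_abs]
    exact abs_le.mpr ⟨by linarith [hφ0 x], hφM x⟩
  have hCeq : ∀ X Y : ℝ, Cexp X Y =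
      ∫ x in Set.Ioc (0:ℝ) W, (a * Real.sqrt (b * (X - x) ^ 2 + Y ^ 2) - c * Y) * φ x := by
    intro X Y; rw [hCexp, intervalIntegral.integral_of_le hW.le]
  have hφI : (∫ x in Set.Ioc (0:ℝ) W, φ x) = 1 := by
    rw [← intervalIntegral.integral_of_le hW.le]; exact hφ1
  have hYpos : ∀ X Y : ℝ, 0 ≤ Y → (∀ X' Y' : ℝ, 0 ≤ Y' → Cexp X Y ≤ Cexp X' Y') → 0 < Y := by
    have hCeq : ∀ X Y : ℝ, Cexp X Y =
        ∫ x in Set.Ioc (0:ℝ) W, (a * Real.sqrt (b * (X - x) ^ 2 + Y ^ 2) - c * Y) * φ x := by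
      intro X Y; rw [hCexp, intervalIntegral.integral_of_le hW.le]
    have hφI : (∫ x in Set.Ioc (0:ℝ) W, φ x) = 1 := by
      rw [← intervalIntegral.integral_of_le hW.le]; exact hφ1
    intro X Y hY hmin
    rcases hY.lt_or_eq with h | h
    · exact h
    exfalso
    rw [← h] at hmin
    clear h hY Y
    set F : ℕ → ℝ → ℝ := fun n x =>
      a * (Real.sqrt (b * (X - x) ^ 2 + (1 / ((n:ℝ) + 1)) ^ 2) - Real.sqrt (b * (X - x) ^ 2))
        * ((n:ℝ) + 1) * φ x with hF
    have hd0 : ∀ (n : ℕ) x, 0 ≤ Real.sqrt (b * (X - x) ^ 2 + (1 / ((n:ℝ) + 1)) ^ 2)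
        - Real.sqrt (b * (X - x) ^ 2) := by
      intro n x
      have : Real.sqrt (b * (X - x) ^ 2) ≤ Real.sqrt (b * (X - x) ^ 2 + (1 / ((n:ℝ) + 1)) ^ 2) :=
        Real.sqrt_le_sqrt (by nlinarith [sq_nonneg (1 / ((n:ℝ) + 1))])
      linarith
    have hdle : ∀ (n : ℕ) x, Real.sqrt (b * (X - x) ^ 2 + (1 / ((n:ℝ) + 1)) ^ 2)
        - Real.sqrt (b * (X - x) ^ 2) ≤ 1 / ((n:ℝ) + 1) := by
      intro n x
      have := aux_sqrt_add (b * (X - x) ^ 2) (1 / ((n:ℝ) + 1)) (by positivity) (by positivity)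
      linarith
    have hFnn : ∀ n x, 0 ≤ F n x := by
      intro n x
      simp only [hF]
      exact mul_nonneg (mul_nonneg (mul_nonneg ha.le (hd0 n x)) (by positivity)) (hφ0 x)
    have hFle : ∀ n x, F n x ≤ a * M := by
      intro n x
      have h1 := hdle n x
      have h2 := hd0 n x
      have h3 := hφ0 x
      have h4 := hφM x
      have h5 : (0:ℝ) < (n:ℝ) + 1 := by positivity
      simp only [hF]
      have key : a * (Real.sqrt (b * (X - x) ^ 2 + (1 / ((n:ℝ) + 1)) ^ 2)
          - Real.sqrt (b * (X - x) ^ 2)) * ((n:ℝ) + 1) ≤ a := by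
        have := mul_le_mul_of_nonneg_right (mul_le_mul_of_nonneg_left h1 ha.le) h5.le
        calc a * _ * ((n:ℝ) + 1) ≤ a * (1 / ((n:ℝ) + 1)) * ((n:ℝ) + 1) := this
          _ = a := by field_simp
      calc a * _ * ((n:ℝ) + 1) * φ x ≤ a * φ x := by
            have hnn : 0 ≤ a * (Real.sqrt (b * (X - x) ^ 2 + (1 / ((n:ℝ) + 1)) ^ 2)
                - Real.sqrt (b * (X - x) ^ 2)) * ((n:ℝ) + 1) := by positivity
            nlinarith
        _ ≤ a * M := by nlinarith
    have hFmeas : ∀ n : ℕ, Measurable (F n) := by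
      intro n; simp only [hF]; apply Measurable.mul _ hφm; fun_prop
    have hFint : ∀ n : ℕ, IntegrableOn (F n) (Set.Ioc (0:ℝ) W) volume := by
      intro n
      apply Measure.integrableOn_of_bounded hμfin (hFmeas n).aestronglyMeasurable (M := a * M)
      filter_upwards with x
      rw [Real.norm_eq_abs, abs_of_nonneg (hFnn n x)]
      exact hFle n x
    -- dominated convergence
    have hdct : Tendsto (fun n => ∫ x in Set.Ioc (0:ℝ) W, F n x) atTop (nhds 0) := by
      have h0 : Tendsto (fun n => ∫ x in Set.Ioc (0:ℝ) W, F n x) atTop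
          (nhds (∫ x in Set.Ioc (0:ℝ) W, (0:ℝ))) := by
        apply MeasureTheory.tendsto_integral_of_dominated_convergence (bound := fun _ => a * M)
        · exact fun n => ((hFmeas n).aestronglyMeasurable).restrict
        · exact integrableOn_const hμfin
        · intro n
          filter_upwards with x
          rw [Real.norm_eq_abs, abs_of_nonneg (hFnn n x)]
          exact hFle n x
        · have hane : ∀ᵐ x : ℝ, x ≠ X := by
            rw [ae_iff]
            have : {x : ℝ | ¬x ≠ X} = {X} := by ext y; simp
            rw [this]
            exact measure_singleton X
          apply ae_restrict_of_ae
          filter_upwards [hane] with x hx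
          have hne : X - x ≠ 0 := sub_ne_zero.mpr (Ne.symm hx)
          have hpos : 0 < (X - x) ^ 2 := lt_of_le_of_ne (sq_nonneg _) (Ne.symm (pow_ne_zero 2 hne))
          have hs : 0 < b * (X - x) ^ 2 := by positivity
          have hsqs : 0 < Real.sqrt (b * (X - x) ^ 2) := Real.sqrt_pos.mpr hs
          refine squeeze_zero (f := fun n : ℕ => F n x)
            (g := fun n => (a * M / (2 * Real.sqrt (b * (X - x) ^ 2))) * (1 / ((n:ℝ) + 1)))
            (fun n => hFnn n x) ?_ ?_
          · intro n
            have h1 := aux_sqrt_add2 (b * (X - x) ^ 2) (1 / ((n:ℝ) + 1)) hs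
            have h5 : (0:ℝ) < (n:ℝ) + 1 := by positivity
            simp only [hF]
            have key : a * (Real.sqrt (b * (X - x) ^ 2 + (1 / ((n:ℝ) + 1)) ^ 2)
                - Real.sqrt (b * (X - x) ^ 2)) * ((n:ℝ) + 1) * φ x
                ≤ a * ((1 / ((n:ℝ) + 1)) ^ 2 / (2 * Real.sqrt (b * (X - x) ^ 2))) * ((n:ℝ) + 1) * M := by
              have hd2 : Real.sqrt (b * (X - x) ^ 2 + (1 / ((n:ℝ) + 1)) ^ 2)
                  - Real.sqrt (b * (X - x) ^ 2) ≤ (1 / ((n:ℝ) + 1)) ^ 2 / (2 * Real.sqrt (b * (X - x) ^ 2)) := by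
                linarith
              have h2 := hd0 n x
              have h3 := hφ0 x
              have h4 := hφM x
              calc a * (Real.sqrt (b * (X - x) ^ 2 + (1 / ((n:ℝ) + 1)) ^ 2)
                  - Real.sqrt (b * (X - x) ^ 2)) * ((n:ℝ) + 1) * φ x
                  ≤ a * ((1 / ((n:ℝ) + 1)) ^ 2 / (2 * Real.sqrt (b * (X - x) ^ 2))) * ((n:ℝ) + 1) * φ x :=
                    mul_le_mul_of_nonneg_right
                      (mul_le_mul_of_nonneg_right (mul_le_mul_of_nonneg_left hd2 ha.le) h5.le) h3
                _ ≤ _ := mul_le_mul_of_nonneg_left h4 (by positivity)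
            calc F n x ≤ _ := key
              _ = (a * M / (2 * Real.sqrt (b * (X - x) ^ 2))) * (1 / ((n:ℝ) + 1)) := by
                field_simp
          · have h1 := tendsto_one_div_add_atTop_nhds_zero_nat (𝕜 := ℝ)
            have h2 := h1.const_mul (a * M / (2 * Real.sqrt (b * (X - x) ^ 2)))
            simpa using h2
      simpa using h0
    obtain ⟨n, hn⟩ := (hdct.eventually_lt_const hc).exists
    have hYnpos : 0 < 1 / ((n:ℝ) + 1) := by positivity
    have hYn1 : (1 / ((n:ℝ) + 1)) * ((n:ℝ) + 1) = 1 := by field_simp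
    have e4 : ∀ x : ℝ, (a * Real.sqrt (b * (X - x) ^ 2 + (1 / ((n:ℝ) + 1)) ^ 2)
          - c * (1 / ((n:ℝ) + 1))) * φ x
        - (a * Real.sqrt (b * (X - x) ^ 2 + 0 ^ 2) - c * 0) * φ x
        = (1 / ((n:ℝ) + 1)) * (F n x - c * φ x) := by
      intro x
      have h02 : b * (X - x) ^ 2 + (0:ℝ) ^ 2 = b * (X - x) ^ 2 := by ring
      rw [h02]
      simp only [hF]
      linear_combination (-(a * (Real.sqrt (b * (X - x) ^ 2 + (1 / ((n:ℝ) + 1)) ^ 2)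
        - Real.sqrt (b * (X - x) ^ 2)) * φ x)) * hYn1
    have hdiff : Cexp X (1 / ((n:ℝ) + 1)) - Cexp X 0
        = (1 / ((n:ℝ) + 1)) * ((∫ x in Set.Ioc (0:ℝ) W, F n x) - c) := by
      rw [hCeq X (1 / ((n:ℝ) + 1)), hCeq X 0,
        ← integral_sub (hGint X (1 / ((n:ℝ) + 1))) (hGint X 0)]
      calc (∫ x in Set.Ioc (0:ℝ) W,
            ((a * Real.sqrt (b * (X - x) ^ 2 + (1 / ((n:ℝ) + 1)) ^ 2)
              - c * (1 / ((n:ℝ) + 1))) * φ x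
            - (a * Real.sqrt (b * (X - x) ^ 2 + 0 ^ 2) - c * 0) * φ x))
          = ∫ x in Set.Ioc (0:ℝ) W, (1 / ((n:ℝ) + 1)) * (F n x - c * φ x) := by
            apply integral_congr_ae
            filter_upwards with x
            exact e4 x
        _ = (1 / ((n:ℝ) + 1)) * ∫ x in Set.Ioc (0:ℝ) W, (F n x - c * φ x) :=
            integral_const_mul _ _
        _ = (1 / ((n:ℝ) + 1)) * ((∫ x in Set.Ioc (0:ℝ) W, F n x)
              - ∫ x in Set.Ioc (0:ℝ) W, c * φ x) := by
            rw [integral_sub (hFint n) (hφint.const_mul c)]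
        _ = (1 / ((n:ℝ) + 1)) * ((∫ x in Set.Ioc (0:ℝ) W, F n x) - c) := by
            rw [integral_const_mul c, hφI, mul_one]
    have hlt : Cexp X (1 / ((n:ℝ) + 1)) < Cexp X 0 := by
      have : (1 / ((n:ℝ) + 1)) * ((∫ x in Set.Ioc (0:ℝ) W, F n x) - c) < 0 :=
        mul_neg_of_pos_of_neg hYnpos (by linarith)
      linarith
    exact absurd (hmin X (1 / ((n:ℝ) + 1)) hYnpos.le) (not_le.mpr hlt)
  intro X₁ Y₁ X₂ Y₂ hY₁ hY₂ h₁ h₂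
  have hY₁' : 0 < Y₁ := hYpos X₁ Y₁ hY₁ h₁
  have hY₂' : 0 < Y₂ := hYpos X₂ Y₂ hY₂ h₂
  by_contra hne
  have hYm : (0:ℝ) ≤ (Y₁ + Y₂) / 2 := by positivity
  have hV : Cexp X₂ Y₂ = Cexp X₁ Y₁ := le_antisymm (h₂ X₁ Y₁ hY₁'.le) (h₁ X₂ Y₂ hY₂'.le)
  have hb' : Real.sqrt b ^ 2 = b := Real.sq_sqrt hb.le
  have hbpos : 0 < Real.sqrt b := Real.sqrt_pos.mpr hb
  have h4 : Real.sqrt 4 = 2 := by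
    rw [show (4:ℝ) = 2 ^ 2 by norm_num, Real.sqrt_sq (by norm_num : (0:ℝ) ≤ 2)]
  -- midpoint sqrt identity
  have hmid : ∀ x : ℝ, Real.sqrt (b * ((X₁ + X₂) / 2 - x) ^ 2 + ((Y₁ + Y₂) / 2) ^ 2)
      = Real.sqrt ((Real.sqrt b * (X₁ - x) + Real.sqrt b * (X₂ - x)) ^ 2 + (Y₁ + Y₂) ^ 2) / 2 := by
    intro x
    have e : (Real.sqrt b * (X₁ - x) + Real.sqrt b * (X₂ - x)) ^ 2 + (Y₁ + Y₂) ^ 2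
        = 4 * (b * ((X₁ + X₂) / 2 - x) ^ 2 + ((Y₁ + Y₂) / 2) ^ 2) := by
      have e2 : (Real.sqrt b * (X₁ - x) + Real.sqrt b * (X₂ - x)) ^ 2
          = Real.sqrt b ^ 2 * ((X₁ - x) + (X₂ - x)) ^ 2 := by ring
      rw [e2, hb']; ring
    rw [e, Real.sqrt_mul (by norm_num : (0:ℝ) ≤ 4), h4]
    ring
  have hsq1 : ∀ x : ℝ, (Real.sqrt b * (X₁ - x)) ^ 2 + Y₁ ^ 2 = b * (X₁ - x) ^ 2 + Y₁ ^ 2 := by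
    intro x; rw [mul_pow, hb']
  have hsq2 : ∀ x : ℝ, (Real.sqrt b * (X₂ - x)) ^ 2 + Y₂ ^ 2 = b * (X₂ - x) ^ 2 + Y₂ ^ 2 := by
    intro x; rw [mul_pow, hb']
  set H : ℝ → ℝ := fun x =>
    (1/2) * ((a * Real.sqrt (b * (X₁ - x) ^ 2 + Y₁ ^ 2) - c * Y₁) * φ x)
    + (1/2) * ((a * Real.sqrt (b * (X₂ - x) ^ 2 + Y₂ ^ 2) - c * Y₂) * φ x)
    - (a * Real.sqrt (b * ((X₁ + X₂) / 2 - x) ^ 2 + ((Y₁ + Y₂) / 2) ^ 2) - c * ((Y₁ + Y₂) / 2)) * φ x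
    with hHdef
  have hHfact : ∀ x : ℝ, H x = φ x * (a / 2) *
      ((Real.sqrt (b * (X₁ - x) ^ 2 + Y₁ ^ 2) + Real.sqrt (b * (X₂ - x) ^ 2 + Y₂ ^ 2))
        - 2 * Real.sqrt (b * ((X₁ + X₂) / 2 - x) ^ 2 + ((Y₁ + Y₂) / 2) ^ 2)) := by
    intro x; simp only [hHdef]; ring
  have hH0 : ∀ x : ℝ, 0 ≤ H x := by
    intro x
    have t := aux_tri (Real.sqrt b * (X₁ - x)) Y₁ (Real.sqrt b * (X₂ - x)) Y₂
    rw [hsq1, hsq2] at t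
    rw [hHfact x, hmid x]
    have h5 : 0 ≤ φ x * (a / 2) := mul_nonneg (hφ0 x) (by positivity)
    have h6 : (Real.sqrt (b * (X₁ - x) ^ 2 + Y₁ ^ 2) + Real.sqrt (b * (X₂ - x) ^ 2 + Y₂ ^ 2))
        - 2 * (Real.sqrt ((Real.sqrt b * (X₁ - x) + Real.sqrt b * (X₂ - x)) ^ 2 + (Y₁ + Y₂) ^ 2) / 2)
        ≥ 0 := by linarith
    exact mul_nonneg h5 h6
  have iA : Integrable (fun x =>
      (1/2) * ((a * Real.sqrt (b * (X₁ - x) ^ 2 + Y₁ ^ 2) - c * Y₁) * φ x)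
      + (1/2) * ((a * Real.sqrt (b * (X₂ - x) ^ 2 + Y₂ ^ 2) - c * Y₂) * φ x))
      (volume.restrict (Set.Ioc (0:ℝ) W)) := by
    exact Integrable.add ((hGint X₁ Y₁).const_mul _) ((hGint X₂ Y₂).const_mul _)
  have hHint : IntegrableOn H (Set.Ioc (0:ℝ) W) volume := by
    exact Integrable.sub iA (hGint ((X₁ + X₂) / 2) ((Y₁ + Y₂) / 2))
  have hHI : (∫ x in Set.Ioc (0:ℝ) W, H x) ≤ 0 := by
    have e : (∫ x in Set.Ioc (0:ℝ) W, H x)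
        = (1/2) * Cexp X₁ Y₁ + (1/2) * Cexp X₂ Y₂ - Cexp ((X₁ + X₂) / 2) ((Y₁ + Y₂) / 2) := by
      simp only [hHdef]
      rw [integral_sub iA (hGint ((X₁ + X₂) / 2) ((Y₁ + Y₂) / 2)),
        integral_add ((hGint X₁ Y₁).const_mul _) ((hGint X₂ Y₂).const_mul _),
        integral_const_mul, integral_const_mul,
        hCeq X₁ Y₁, hCeq X₂ Y₂, hCeq ((X₁ + X₂) / 2) ((Y₁ + Y₂) / 2)]
    rw [e, hV]
    have := h₁ ((X₁ + X₂) / 2) ((Y₁ + Y₂) / 2) hYm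
    linarith
  have hHzero : H =ᵐ[volume.restrict (Set.Ioc (0:ℝ) W)] 0 := by
    refine (integral_eq_zero_iff_of_nonneg_ae (ae_of_all _ hH0) hHint).mp ?_
    exact le_antisymm hHI (integral_nonneg hH0)
  -- the equality set is a subsingleton
  have hS : Set.Subsingleton {x : ℝ | (X₁ - x) * Y₂ = (X₂ - x) * Y₁} := by
    intro x hx y hy
    simp only [Set.mem_setOf_eq] at hx hy
    rcases eq_or_ne Y₁ Y₂ with hYe | hYe
    · exfalso
      apply hne
      refine ⟨?_, hYe⟩
      rw [← hYe] at hx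
      have := mul_right_cancel₀ (ne_of_gt hY₁') hx
      linarith
    · have hxy : x * (Y₁ - Y₂) = y * (Y₁ - Y₂) := by linear_combination hx - hy
      exact mul_right_cancel₀ (sub_ne_zero.mpr hYe) hxy
  have hSnull : volume {x : ℝ | (X₁ - x) * Y₂ = (X₂ - x) * Y₁} = 0 := hS.measure_zero _
  have hne' : ∀ᵐ x ∂(volume.restrict (Set.Ioc (0:ℝ) W)), ¬((X₁ - x) * Y₂ = (X₂ - x) * Y₁) := by
    apply ae_restrict_of_ae
    rw [ae_iff]
    simpa [not_not] using hSnull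
  have hφzero : φ =ᵐ[volume.restrict (Set.Ioc (0:ℝ) W)] 0 := by
    filter_upwards [hHzero, hne'] with x hx hnx
    by_contra hφx
    apply hnx
    have hφx' : 0 < φ x := lt_of_le_of_ne (hφ0 x) (Ne.symm hφx)
    rw [Pi.zero_apply, hHfact x] at hx
    have hfne : φ x * (a / 2) ≠ 0 := by positivity
    have hsum : Real.sqrt (b * (X₁ - x) ^ 2 + Y₁ ^ 2) + Real.sqrt (b * (X₂ - x) ^ 2 + Y₂ ^ 2)
        = 2 * Real.sqrt (b * ((X₁ + X₂) / 2 - x) ^ 2 + ((Y₁ + Y₂) / 2) ^ 2) := by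
      rcases mul_eq_zero.mp hx with h | h
      · exact absurd h hfne
      · linarith
    rw [hmid x] at hsum
    have heq : Real.sqrt ((Real.sqrt b * (X₁ - x) + Real.sqrt b * (X₂ - x)) ^ 2 + (Y₁ + Y₂) ^ 2)
        = Real.sqrt ((Real.sqrt b * (X₁ - x)) ^ 2 + Y₁ ^ 2)
          + Real.sqrt ((Real.sqrt b * (X₂ - x)) ^ 2 + Y₂ ^ 2) := by
      rw [hsq1, hsq2]; linarith
    have hkey := aux_tri_eq (Real.sqrt b * (X₁ - x)) Y₁ (Real.sqrt b * (X₂ - x)) Y₂ heq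
    have : Real.sqrt b * ((X₁ - x) * Y₂) = Real.sqrt b * ((X₂ - x) * Y₁) := by
      linear_combination hkey
    exact mul_left_cancel₀ (ne_of_gt hbpos) this
  have h1 : (1:ℝ) = 0 := by
    rw [← hφI, integral_congr_ae hφzero]
    simp
  exact one_ne_zero h1
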